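/- Fix integers m ≥ 1 and n ≥ 0. Then Σ_{k=0}^{n} [ Σ_{j=0}^{k} (−1)^j C(k,j) (n−k+1)_j (m+k−1)_{k−j} ] / (m+n)_k = Σ_{j=0}^{n} (−2)^j · C(n+j+1, 2j+1) / C(n+m−1+j, j). -/

import Mathlib

open Finset

/-- Pochhammer symbol `(x)_p = x (x+1) ⋯ (x+p-1)`. -/
noncomputable def poch (x : ℝ) (p : ℕ) : ℝ := ∏ i ∈ Finset.range p, (x + i)

/-- Resummation of the closed form of the normalized average
outcome-collision probability. -/
noncomputable def rch (x : ℝ) (p : ℕ) : ℝ := (∏ i ∈ Finset.range p, (x - i)) / p.factorial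

lemma rch_zero (x : ℝ) : rch x 0 = 1 := by simp [rch]

lemma poch_succ (x : ℝ) (p : ℕ) : poch x (p+1) = poch x p * (x + p) := by
  simp [poch, Finset.prod_range_succ]

lemma poch_add (x : ℝ) (a b : ℕ) : poch x (a+b) = poch x a * poch (x+a) b := by
  simp only [poch, Finset.prod_range_add]
  congr 1
  refine Finset.prod_congr rfl fun i _ => by push_cast; ring

lemma poch_pos {x : ℝ} (hx : 0 < x) (p : ℕ) : 0 < poch x p := by
  refine Finset.prod_pos fun i _ => by positivity

lemma poch_eq_rch (x : ℝ) (p : ℕ) : poch x p = p.factorial * rch (x + p - 1) p := by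
  rw [rch, poch, ← Finset.prod_range_reflect]
  rw [mul_div_cancel₀]
  · refine Finset.prod_congr rfl fun i hi => ?_
    simp only [Finset.mem_range] at hi
    have h1 : i ≤ p - 1 := Nat.le_sub_one_of_lt hi
    have h2 : 1 ≤ p := by omega
    have : ((p - 1 - i : ℕ) : ℝ) = (p : ℝ) - 1 - i := by
      rw [Nat.cast_sub h1, Nat.cast_sub h2]
      push_cast; ring
    rw [this]; ring
  · positivity

lemma pochNat (a p : ℕ) : poch ((a:ℝ)+1) p = (p.factorial : ℝ) * ((a+p).choose p : ℝ) := by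
  induction p with
  | zero => simp [poch]
  | succ p ih =>
      rw [poch_succ, ih]
      have h : (a+p+1) * ((a+p).choose p) = ((a+p+1).choose (p+1)) * (p+1) := by
        simpa using Nat.add_one_mul_choose_eq (a+p) p
      have := congrArg (fun t : ℕ => (t : ℝ)) h
      rw [Nat.factorial_succ, show a + (p+1) = a+p+1 from by omega]
      push_cast at this ⊢
      nlinarith [this]

lemma rch_pascal (x : ℝ) (p : ℕ) : rch x (p+1) = rch (x-1) (p+1) + rch (x-1) p := by
  have h1 : ∏ i ∈ Finset.range (p+1), (x - i) = x * ∏ i ∈ Finset.range p, (x - 1 - i) := by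
    rw [Finset.prod_range_succ']
    simp only [Nat.cast_zero, sub_zero]
    rw [mul_comm]
    congr 1
    refine Finset.prod_congr rfl fun i _ => by push_cast; ring
  have h2 : ∏ i ∈ Finset.range (p+1), (x - 1 - i) = (∏ i ∈ Finset.range p, (x - 1 - i)) * (x - 1 - p) := by
    rw [Finset.prod_range_succ]
  simp only [rch, h1, h2]
  have hp : (0:ℝ) < (p+1).factorial := by positivity
  have hp2 : (0:ℝ) < p.factorial := by positivity
  field_simp
  rw [Nat.factorial_succ]
  push_cast
  ring

lemma rch_zero_nat {p : ℕ} (hp : 1 ≤ p) : rch 0 p = 0 := by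
  rw [rch]
  rw [Finset.prod_eq_zero (Finset.mem_range.mpr (by omega : 0 < p))]
  · simp
  · simp

lemma rch_neg (a p : ℕ) : rch (-(a:ℝ)-1) p = (-1)^p * ((a+p).choose p : ℝ) := by
  have : ∏ i ∈ Finset.range p, (-(a:ℝ)-1 - i) = (-1)^p * poch ((a:ℝ)+1) p := by
    rw [poch, Finset.pow_eq_prod_const, ← Finset.prod_mul_distrib]
    refine Finset.prod_congr rfl fun i _ => by push_cast; ring
  rw [rch, this, pochNat]
  have hp : (0:ℝ) < p.factorial := by positivity
  field_simp

noncomputable def Lf (u k : ℕ) (x : ℝ) : ℝ :=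
  ∑ j ∈ Finset.range (k+1), (-1)^j * (((u+j).choose j : ℕ) : ℝ) * rch (x - j) (k - j)

noncomputable def Rf (u k : ℕ) (x : ℝ) : ℝ :=
  ∑ i ∈ Finset.range (k+1), (-2)^i * (((u+i).choose i : ℕ) : ℝ) * rch (x + u + 1) (k - i)

lemma Lf_rec (u k : ℕ) (x : ℝ) : Lf u (k+1) x = Lf u (k+1) (x-1) + Lf u k (x-1) := by
  have h1 := Finset.sum_range_succ
    (fun j => (-1:ℝ)^j * (((u+j).choose j : ℕ) : ℝ) * rch (x - j) (k+1 - j)) (k+1)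
  have h2 := Finset.sum_range_succ
    (fun j => (-1:ℝ)^j * (((u+j).choose j : ℕ) : ℝ) * rch (x - 1 - j) (k+1 - j)) (k+1)
  have main : ∑ j ∈ Finset.range (k+1), (-1:ℝ)^j * (((u+j).choose j : ℕ) : ℝ) * rch (x - j) (k+1 - j)
      = ∑ j ∈ Finset.range (k+1), (-1:ℝ)^j * (((u+j).choose j : ℕ) : ℝ) * rch (x - 1 - j) (k+1 - j)
      + ∑ j ∈ Finset.range (k+1), (-1:ℝ)^j * (((u+j).choose j : ℕ) : ℝ) * rch (x - 1 - j) (k - j) := by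
    rw [← Finset.sum_add_distrib]
    refine Finset.sum_congr rfl fun j hj => ?_
    have hjk : j ≤ k := Nat.lt_succ_iff.mp (Finset.mem_range.mp hj)
    have hs : k + 1 - j = (k - j) + 1 := by omega
    rw [hs, rch_pascal (x - j) (k - j), show x - j - 1 = x - 1 - j from by ring]
    ring
  simp only [Lf]
  rw [h1, h2, main]
  simp only [Nat.sub_self, rch_zero]
  ring

lemma Rf_rec (u k : ℕ) (x : ℝ) : Rf u (k+1) x = Rf u (k+1) (x-1) + Rf u k (x-1) := by
  have h1 := Finset.sum_range_succ
    (fun i => (-2:ℝ)^i * (((u+i).choose i : ℕ) : ℝ) * rch (x + u + 1) (k+1 - i)) (k+1)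
  have h2 := Finset.sum_range_succ
    (fun i => (-2:ℝ)^i * (((u+i).choose i : ℕ) : ℝ) * rch (x - 1 + u + 1) (k+1 - i)) (k+1)
  have main : ∑ i ∈ Finset.range (k+1), (-2:ℝ)^i * (((u+i).choose i : ℕ) : ℝ) * rch (x + u + 1) (k+1 - i)
      = ∑ i ∈ Finset.range (k+1), (-2:ℝ)^i * (((u+i).choose i : ℕ) : ℝ) * rch (x - 1 + u + 1) (k+1 - i)
      + ∑ i ∈ Finset.range (k+1), (-2:ℝ)^i * (((u+i).choose i : ℕ) : ℝ) * rch (x - 1 + u + 1) (k - i) := by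
    rw [← Finset.sum_add_distrib]
    refine Finset.sum_congr rfl fun i hi => ?_
    have hik : i ≤ k := Nat.lt_succ_iff.mp (Finset.mem_range.mp hi)
    have hs : k + 1 - i = (k - i) + 1 := by omega
    rw [hs, rch_pascal (x + u + 1) (k - i), show x + u + 1 - 1 = x - 1 + u + 1 from by ring]
    ring
  simp only [Rf]
  rw [h1, h2, main]
  simp only [Nat.sub_self, rch_zero]
  ring

lemma choose_mul_choose (u k j : ℕ) (h : j ≤ k) :
    (((u+j).choose j : ℕ) : ℝ) * (((u+k).choose (k-j) : ℕ) : ℝ)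
      = (((u+k).choose k : ℕ) : ℝ) * ((k.choose j : ℕ) : ℝ) := by
  have e1 : (u+j).choose j * j.factorial * u.factorial = (u+j).factorial := by
    have := Nat.choose_mul_factorial_mul_factorial (Nat.le_add_left j u)
    simpa using this
  have e2 : (u+k).choose (k-j) * (k-j).factorial * (u+j).factorial = (u+k).factorial := by
    have h2 : k - j ≤ u + k := by omega
    have := Nat.choose_mul_factorial_mul_factorial h2
    rwa [show u + k - (k - j) = u + j from by omega] at this
  have e3 : (u+k).choose k * k.factorial * u.factorial = (u+k).factorial := by
    have := Nat.choose_mul_factorial_mul_factorial (Nat.le_add_left k u)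
    simpa using this
  have e4 : k.choose j * j.factorial * (k-j).factorial = k.factorial := by
    exact Nat.choose_mul_factorial_mul_factorial h
  have r1 := congrArg (fun t : ℕ => (t : ℝ)) e1
  have r2 := congrArg (fun t : ℕ => (t : ℝ)) e2
  have r3 := congrArg (fun t : ℕ => (t : ℝ)) e3
  have r4 := congrArg (fun t : ℕ => (t : ℝ)) e4
  push_cast at r1 r2 r3 r4
  have hu : ((u.factorial:ℝ)) ≠ 0 := by positivity
  have hj : ((j.factorial:ℝ)) ≠ 0 := by positivity
  have hkj : (((k-j).factorial:ℝ)) ≠ 0 := by positivity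
  have hk : ((k.factorial:ℝ)) ≠ 0 := by positivity
  have huj : (((u+j).factorial:ℝ)) ≠ 0 := by positivity
  have c1 : (((u+j).choose j : ℕ) : ℝ) = (u+j).factorial / (j.factorial * u.factorial) := by
    rw [eq_div_iff (by positivity), ← mul_assoc]; exact r1
  have c2 : (((u+k).choose (k-j) : ℕ) : ℝ) = (u+k).factorial / ((k-j).factorial * (u+j).factorial) := by
    rw [eq_div_iff (by positivity), ← mul_assoc]; exact r2
  have c3 : (((u+k).choose k : ℕ) : ℝ) = (u+k).factorial / (k.factorial * u.factorial) := by
    rw [eq_div_iff (by positivity), ← mul_assoc]; exact r3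
  have c4 : ((k.choose j : ℕ) : ℝ) = k.factorial / (j.factorial * (k-j).factorial) := by
    rw [eq_div_iff (by positivity), ← mul_assoc]; exact r4
  rw [c1, c2, c3, c4]
  field_simp

lemma Lf_eval (u k : ℕ) : Lf u k (-(u:ℝ)-1) = (-1)^k * 2^k * (((u+k).choose k : ℕ) : ℝ) := by
  have step : ∀ j ∈ Finset.range (k+1),
      (-1:ℝ)^j * (((u+j).choose j : ℕ) : ℝ) * rch (-(u:ℝ)-1 - j) (k - j)
        = (-1)^k * (((u+k).choose k : ℕ) : ℝ) * ((k.choose j : ℕ) : ℝ) := by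
    intro j hj
    have hjk : j ≤ k := Nat.lt_succ_iff.mp (Finset.mem_range.mp hj)
    have e : -(u:ℝ)-1 - j = -((u+j : ℕ) : ℝ) - 1 := by push_cast; ring
    rw [e, rch_neg (u+j) (k-j), show u + j + (k - j) = u + k from by omega]
    have : (-1:ℝ)^j * (-1:ℝ)^(k-j) = (-1)^k := by
      rw [← pow_add, show j + (k - j) = k from by omega]
    calc (-1:ℝ)^j * (((u+j).choose j : ℕ) : ℝ) * ((-1)^(k-j) * (((u+k).choose (k-j) : ℕ) : ℝ))
        = ((-1:ℝ)^j * (-1:ℝ)^(k-j)) * ((((u+j).choose j : ℕ) : ℝ) * (((u+k).choose (k-j) : ℕ) : ℝ)) := by ring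
      _ = (-1)^k * ((((u+k).choose k : ℕ) : ℝ) * ((k.choose j : ℕ) : ℝ)) := by
          rw [this, choose_mul_choose u k j hjk]
      _ = (-1)^k * (((u+k).choose k : ℕ) : ℝ) * ((k.choose j : ℕ) : ℝ) := by ring
  rw [Lf, Finset.sum_congr rfl step, ← Finset.mul_sum]
  have : ∑ x ∈ Finset.range (k+1), ((k.choose x : ℕ) : ℝ) = (2:ℝ)^k := by
    rw [← Nat.cast_sum]
    norm_cast
    exact Nat.sum_range_choose k
  rw [this]
  ring

lemma Rf_eval (u k : ℕ) : Rf u k (-(u:ℝ)-1) = (-2)^k * (((u+k).choose k : ℕ) : ℝ) := by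
  rw [Rf]
  rw [Finset.sum_eq_single k]
  · rw [show -(u:ℝ)-1 + u + 1 = 0 from by ring, Nat.sub_self, rch_zero, mul_one]
  · intro i hi hik
    have hik' : i < k := by
      have := Finset.mem_range.mp hi; omega
    rw [show -(u:ℝ)-1 + u + 1 = 0 from by ring, rch_zero_nat (by omega : 1 ≤ k - i)]
    ring
  · intro h; exact absurd (Finset.self_mem_range_succ k) h

lemma key (u k : ℕ) : ∀ (z : ℤ), Lf u k (z:ℝ) = Rf u k (z:ℝ) := by
  induction k with
  | zero =>
      intro z
      simp [Lf, Rf, rch_zero]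
  | succ k ih =>
      set g : ℤ → ℝ := fun z => Lf u (k+1) (z:ℝ) - Rf u (k+1) (z:ℝ) with hg
      have hstep : ∀ z : ℤ, g z = g (z-1) := by
        intro z
        have hcast : ((z-1 : ℤ) : ℝ) = (z:ℝ) - 1 := by push_cast; ring
        have hL := Lf_rec u k ((z:ℝ))
        have hR := Rf_rec u k ((z:ℝ))
        have hk : Lf u k ((z:ℝ)-1) = Rf u k ((z:ℝ)-1) := by
          have := ih (z-1); rwa [hcast] at this
        simp only [hg, hcast]
        rw [hL, hR]
        linarith [hk]
      have hconst : ∀ z : ℤ, g z = g 0 := by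
        intro z
        induction z using Int.induction_on with
        | zero => rfl
        | succ i hi =>
            have := hstep ((i:ℤ)+1)
            rw [show ((i:ℤ)+1)-1 = (i:ℤ) from by ring] at this
            rw [this, hi]
        | pred i hi =>
            have h2 : g (-(i:ℤ)-1) = g (-(i:ℤ)) := (hstep (-(i:ℤ))).symm
            rw [h2, hi]
      have hzero : g (-(u:ℤ)-1) = 0 := by
        have hcast : ((-(u:ℤ)-1 : ℤ) : ℝ) = -(u:ℝ)-1 := by push_cast; ring
        simp only [hg, hcast]
        rw [Lf_eval, Rf_eval]
        rw [neg_pow (2:ℝ) (k+1)]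
        ring
      intro z
      have : g z = 0 := by rw [hconst z, ← hconst (-(u:ℤ)-1), hzero]
      simpa [hg] using sub_eq_zero.mp this

lemma choose_conv (p q : ℕ) : ∀ s : ℕ,
    ∑ k ∈ Finset.range (s+1), (k.choose p) * ((s-k).choose q) = (s+1).choose (p+q+1) := by
  induction q with
  | zero =>
      intro s
      induction s with
      | zero =>
          cases p with
          | zero => simp
          | succ t =>
              simp [Nat.choose_zero_succ, Nat.choose_eq_zero_of_lt (show 1 < t+1+0+1 from by omega)]
      | succ s ihs =>
          rw [Finset.sum_range_succ]
          have e : ∀ k ∈ Finset.range (s+1), (k.choose p) * ((s+1-k).choose 0) = (k.choose p) * ((s-k).choose 0) := by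
            intro k hk; simp
          rw [Finset.sum_congr rfl e, ihs]
          simp only [Nat.sub_self, Nat.choose_self, mul_one, Nat.add_zero]
          rw [Nat.choose_succ_succ' (s+1) p]
          omega
  | succ q ihq =>
      intro s
      induction s with
      | zero =>
          simp only [Finset.range_one, Finset.sum_singleton, Nat.zero_sub, Nat.choose_zero_succ, mul_zero]
          exact (Nat.choose_eq_zero_of_lt (by omega)).symm
      | succ s ihs =>
          rw [Finset.sum_range_succ]
          have e : ∀ k ∈ Finset.range (s+1), (k.choose p) * ((s+1-k).choose (q+1))
              = (k.choose p) * ((s-k).choose q) + (k.choose p) * ((s-k).choose (q+1)) := by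
            intro k hk
            have hks : k ≤ s := Nat.lt_succ_iff.mp (Finset.mem_range.mp hk)
            rw [show s+1-k = (s-k)+1 from by omega, Nat.choose_succ_succ' (s-k) q]
            ring
          rw [Finset.sum_congr rfl e, Finset.sum_add_distrib, ihq s, ihs]
          simp only [Nat.sub_self, Nat.choose_zero_succ, mul_zero, Nat.add_zero, add_zero]
          rw [show p+(q+1)+1 = (p+q+1)+1 from by omega, Nat.choose_succ_succ' (s+1) (p+q+1)]

lemma conv2 (n i : ℕ) :
    ∑ k ∈ Finset.range (n+1), (k.choose i) * ((n-k+i).choose i) = (n+i+1).choose (2*i+1) := by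
  have base := choose_conv i i (n+i)
  rw [show i+i+1 = 2*i+1 from by ring] at base
  rw [← base]
  have hsub : Finset.range (n+1) ⊆ Finset.range (n+i+1) := by
    apply Finset.range_subset_range.mpr; omega
  have e1 : ∑ k ∈ Finset.range (n+1), (k.choose i) * ((n-k+i).choose i)
      = ∑ k ∈ Finset.range (n+1), (k.choose i) * ((n+i-k).choose i) := by
    refine Finset.sum_congr rfl fun k hk => ?_
    have hkn : k ≤ n := Nat.lt_succ_iff.mp (Finset.mem_range.mp hk)
    rw [show n-k+i = n+i-k from by omega]
  rw [e1]
  refine Finset.sum_subset hsub fun k hk hk2 => ?_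
  have h1 : k < n+i+1 := Finset.mem_range.mp hk
  have h2 : n+1 ≤ k := by
    by_contra h; exact hk2 (Finset.mem_range.mpr (by omega))
  rw [Nat.choose_eq_zero_of_lt (show n+i-k < i from by omega)]
  ring

lemma poch_cast_fact (a p : ℕ) : poch ((a:ℝ)+1) p ≠ 0 := by
  have := poch_pos (show (0:ℝ) < (a:ℝ)+1 by positivity) p
  linarith


theorem stmt5 (m n : ℕ) (hm : 1 ≤ m) :
    ∑ k ∈ Finset.range (n + 1),
      (∑ j ∈ Finset.range (k + 1),
          (-1 : ℝ) ^ j * (k.choose j : ℝ) * poch ((n : ℝ) - k + 1) j *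
            poch ((m : ℝ) + k - 1) (k - j)) / poch ((m : ℝ) + n) k
      = ∑ j ∈ Finset.range (n + 1),
          (-2 : ℝ) ^ j * ((n + j + 1).choose (2 * j + 1) : ℝ) /
            ((n + m - 1 + j).choose j : ℝ) := by
  have hXpos : (0:ℝ) < (m:ℝ) + n := by
    have : (1:ℝ) ≤ (m:ℝ) := by exact_mod_cast hm
    linarith [Nat.cast_nonneg (α := ℝ) n]
  -- Step 1 : per-k transformation
  have stepk : ∀ k ∈ Finset.range (n+1),
      (∑ j ∈ Finset.range (k + 1),
          (-1 : ℝ) ^ j * (k.choose j : ℝ) * poch ((n : ℝ) - k + 1) j *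
            poch ((m : ℝ) + k - 1) (k - j)) / poch ((m : ℝ) + n) k
      = ∑ i ∈ Finset.range (k+1),
          (-2:ℝ)^i * (((n-k+i).choose i : ℕ) : ℝ) * ((i.factorial : ℕ):ℝ) * ((k.choose i : ℕ):ℝ)
            / poch ((m : ℝ) + n) i := by
    intro k hk
    have hkn : k ≤ n := Nat.lt_succ_iff.mp (Finset.mem_range.mp hk)
    set u := n - k with hu
    have hnum : (∑ j ∈ Finset.range (k + 1),
        (-1 : ℝ) ^ j * (k.choose j : ℝ) * poch ((n : ℝ) - k + 1) j *
          poch ((m : ℝ) + k - 1) (k - j))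
        = (k.factorial : ℝ) * Lf u k ((m:ℝ) + 2*k - 2) := by
      rw [Lf, Finset.mul_sum]
      refine Finset.sum_congr rfl fun j hj => ?_
      have hjk : j ≤ k := Nat.lt_succ_iff.mp (Finset.mem_range.mp hj)
      have e1 : (n:ℝ) - k + 1 = ((u:ℕ):ℝ) + 1 := by
        rw [hu, Nat.cast_sub hkn]
      have e2 : poch ((n:ℝ) - k + 1) j = (j.factorial : ℝ) * (((u+j).choose j : ℕ):ℝ) := by
        rw [e1, pochNat]
      have e3 : poch ((m:ℝ) + k - 1) (k - j)
          = ((k-j).factorial : ℝ) * rch ((m:ℝ) + 2*k - 2 - j) (k - j) := by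
        rw [poch_eq_rch]
        congr 2
        have : ((k - j : ℕ) : ℝ) = (k:ℝ) - j := by
          rw [Nat.cast_sub hjk]
        rw [this]; ring
      rw [e2, e3]
      have e4 : (k.factorial : ℝ) = (k.choose j : ℝ) * (j.factorial:ℝ) * ((k-j).factorial:ℝ) := by
        exact_mod_cast congrArg (fun t : ℕ => (t:ℝ)) (Nat.choose_mul_factorial_mul_factorial hjk).symm
      rw [e4]; ring
    have hkey : Lf u k ((m:ℝ) + 2*k - 2) = Rf u k ((m:ℝ) + 2*k - 2) := by
      have := key u k ((m:ℤ) + 2*k - 2)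
      have hc : (((m:ℤ) + 2*k - 2 : ℤ) : ℝ) = (m:ℝ) + 2*k - 2 := by push_cast; ring
      rwa [hc] at this
    rw [hnum, hkey, Rf, Finset.mul_sum, Finset.sum_div]
    refine Finset.sum_congr rfl fun i hi => ?_
    have hik : i ≤ k := Nat.lt_succ_iff.mp (Finset.mem_range.mp hi)
    have e5 : (m:ℝ) + 2*k - 2 + u + 1 = ((m:ℝ) + n + i) + ((k-i:ℕ):ℝ) - 1 := by
      rw [hu, Nat.cast_sub hkn, Nat.cast_sub hik]; ring
    have e6 : rch ((m:ℝ) + 2*k - 2 + u + 1) (k - i)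
        = poch ((m:ℝ) + n + i) (k-i) / ((k-i).factorial : ℝ) := by
      rw [eq_div_iff (by positivity), poch_eq_rch, e5]
      ring
    have e7 : poch ((m:ℝ)+n) k = poch ((m:ℝ)+n) i * poch ((m:ℝ)+n+i) (k-i) := by
      have := poch_add ((m:ℝ)+n) i (k-i)
      rwa [show i + (k-i) = k from by omega] at this
    have hpos1 : (0:ℝ) < poch ((m:ℝ)+n) i := poch_pos hXpos i
    have hpos2 : (0:ℝ) < poch ((m:ℝ)+n+i) (k-i) := poch_pos (by positivity) (k-i)
    have e8 : (k.factorial : ℝ) = (k.choose i : ℝ) * (i.factorial:ℝ) * ((k-i).factorial:ℝ) := by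
      exact_mod_cast congrArg (fun t : ℕ => (t:ℝ)) (Nat.choose_mul_factorial_mul_factorial hik).symm
    rw [e6, e7, e8]
    have hfkj : (0:ℝ) < ((k-i).factorial : ℝ) := by positivity
    field_simp
  rw [Finset.sum_congr rfl stepk]
  -- Step 2 : pad inner sums to range (n+1)
  have pad : ∀ k ∈ Finset.range (n+1),
      (∑ i ∈ Finset.range (k+1),
          (-2:ℝ)^i * (((n-k+i).choose i : ℕ) : ℝ) * ((i.factorial : ℕ):ℝ) * ((k.choose i : ℕ):ℝ)
            / poch ((m : ℝ) + n) i)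
      = ∑ i ∈ Finset.range (n+1),
          (-2:ℝ)^i * (((n-k+i).choose i : ℕ) : ℝ) * ((i.factorial : ℕ):ℝ) * ((k.choose i : ℕ):ℝ)
            / poch ((m : ℝ) + n) i := by
    intro k hk
    have hkn : k ≤ n := Nat.lt_succ_iff.mp (Finset.mem_range.mp hk)
    refine Finset.sum_subset (Finset.range_subset_range.mpr (by omega)) fun i hi hi2 => ?_
    have : k < i := by
      have := Finset.mem_range.mp hi
      by_contra h
      exact hi2 (Finset.mem_range.mpr (by omega))
    rw [Nat.choose_eq_zero_of_lt this]
    simp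
  rw [Finset.sum_congr rfl pad, Finset.sum_comm]
  -- Step 3 : inner convolution
  refine Finset.sum_congr rfl fun i hi => ?_
  have e9 : ∑ k ∈ Finset.range (n+1),
      (-2:ℝ)^i * (((n-k+i).choose i : ℕ) : ℝ) * ((i.factorial : ℕ):ℝ) * ((k.choose i : ℕ):ℝ)
        / poch ((m : ℝ) + n) i
      = ((-2:ℝ)^i * ((i.factorial : ℕ):ℝ) / poch ((m:ℝ)+n) i) *
          (((∑ k ∈ Finset.range (n+1), (k.choose i) * ((n-k+i).choose i) : ℕ)) : ℝ) := by
    rw [Nat.cast_sum, Finset.mul_sum]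
    refine Finset.sum_congr rfl fun k hk => ?_
    push_cast
    ring
  rw [e9, conv2 n i]
  -- Step 4 : final form
  have e10 : poch ((m:ℝ)+n) i = (i.factorial : ℝ) * (((m+n-1+i).choose i : ℕ):ℝ) := by
    have hc : (m:ℝ) + n = (((m+n-1 : ℕ):ℕ):ℝ) + 1 := by
      rw [Nat.cast_sub (by omega : 1 ≤ m+n)]
      push_cast; ring
    rw [hc, pochNat (m+n-1) i]
  rw [e10, show n+m-1+i = m+n-1+i from by omega]
  have hch : (0:ℝ) < (((m+n-1+i).choose i : ℕ):ℝ) := by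
    exact_mod_cast Nat.choose_pos (by omega)
  have hfi : (0:ℝ) < (i.factorial : ℝ) := by positivity
  field_simp
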